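/- (Explicit formula under full activation) Let u ∈ ℝ^E and let λ < 1 − (U_E − E·u_(E)). Then the Sparsegen routing output p* = sparsegen(u, λ) is given coordinatewise by p*_i = 1/E + (u_i − U_E/E)/(1 − λ) for every i ∈ {1,…,E}. -/

import Mathlib

noncomputable section

/-- The probability simplex in `ℝ^E`. -/
def simplex (E : ℕ) : Set (EuclideanSpace ℝ (Fin E)) :=
  {p | (∀ i, 0 ≤ p i) ∧ ∑ i, p i = 1}

/-- The Sparsegen objective `g_{u,λ}(p) = ‖p − u‖₂² − λ‖p‖₂²`. -/
def sparsegenObj {E : ℕ} (u : EuclideanSpace ℝ (Fin E)) (lam : ℝ)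
    (p : EuclideanSpace ℝ (Fin E)) : ℝ :=
  ‖p - u‖ ^ 2 - lam * ‖p‖ ^ 2

/-- Explicit formula under full activation: let `u ∈ ℝ^E` and
`λ < 1 − (U_E − E·u_(E))`.  Then the Sparsegen routing output `p*` (the unique
minimizer over the simplex) is given coordinatewise by
`p*_i = 1/E + (u_i − U_E/E)/(1 − λ)`, where `U_E = Σ_i u_(i)` and
`u_(E) = u (σ ⟨E-1,_⟩)` is the smallest coordinate. -/
theorem full_activation_formula (E : ℕ) (hE : 1 ≤ E)
    (u : EuclideanSpace ℝ (Fin E)) (σ : Equiv.Perm (Fin E))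
    (hσ : Antitone fun i => u (σ i)) (lam : ℝ) (hlam : lam < 1)
    (hfull : lam < 1 - ((∑ j : Fin E, u (σ j)) - E * u (σ ⟨E - 1, by omega⟩)))
    (p : EuclideanSpace ℝ (Fin E)) (hp : p ∈ simplex E)
    (hmin : IsMinOn (sparsegenObj u lam) (simplex E) p) :
    ∀ i : Fin E, p i = 1 / E + (u i - (∑ j : Fin E, u (σ j)) / E) / (1 - lam) := by
  have hE' : (0:ℝ) < E := by exact_mod_cast Nat.pos_of_ne_zero (by omega)
  have hlam' : (0:ℝ) < 1 - lam := by linarith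
  set S : ℝ := ∑ j : Fin E, u (σ j) with hS
  have hsumu : ∑ j : Fin E, u j = S := (Equiv.sum_comp σ u).symm
  have hEne : (E:ℝ) ≠ 0 := ne_of_gt hE'
  have hlne : (1 - lam) ≠ 0 := ne_of_gt hlam'
  set q : EuclideanSpace ℝ (Fin E) :=
    WithLp.toLp 2 (fun i => 1 / E + (u i - S / E) / (1 - lam)) with hq
  have hqj : ∀ i : Fin E,
      q i = ((1 - lam) + (E:ℝ) * u i - S) / ((E:ℝ) * (1 - lam)) := by
    intro i
    simp only [hq]
    field_simp
    ring
  -- sum of q is 1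
  have hsumq : ∑ j : Fin E, q j = 1 := by
    calc ∑ j : Fin E, q j
        = (∑ j : Fin E, ((1 - lam) + (E:ℝ) * u j - S)) / ((E:ℝ) * (1 - lam)) := by
          rw [Finset.sum_div]; exact Finset.sum_congr rfl fun j _ => hqj j
      _ = 1 := by
          rw [Finset.sum_sub_distrib, Finset.sum_add_distrib, ← Finset.mul_sum,
            hsumu, Finset.sum_const, Finset.sum_const, Finset.card_univ,
            Fintype.card_fin, nsmul_eq_mul, nsmul_eq_mul]
          field_simp
          ring
  -- the smallest coordinate
  have humin : ∀ j : Fin E, u (σ ⟨E - 1, by omega⟩) ≤ u j := by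
    intro j
    have hle : σ.symm j ≤ (⟨E - 1, by omega⟩ : Fin E) := by
      rw [Fin.le_def]
      exact Nat.le_pred_of_lt ((σ.symm j).isLt)
    have h2 := hσ hle
    simp only at h2
    rw [Equiv.apply_symm_apply] at h2
    exact h2
  -- nonnegativity of q
  have hqnn : ∀ i : Fin E, 0 ≤ q i := by
    intro j
    have h2 := humin j
    have h3 : (E:ℝ) * u (σ ⟨E - 1, by omega⟩) ≤ (E:ℝ) * u j :=
      mul_le_mul_of_nonneg_left h2 (le_of_lt hE')
    have h1 : (0:ℝ) < (1 - lam) + (E:ℝ) * u j - S := by linarith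
    have hqj : q j = ((1 - lam) + (E:ℝ) * u j - S) / ((E:ℝ) * (1 - lam)) := by
      simp only [hq]
      field_simp
      ring
    rw [hqj]
    exact le_of_lt (div_pos h1 (by positivity))
  have hqs : q ∈ simplex E := ⟨hqnn, hsumq⟩
  -- rewrite u in terms of q
  have hc : ∀ i : Fin E, u i = (1 - lam) * q i - ((1 - lam) / E - S / E) := by
    intro i
    simp only [hq]
    field_simp
    ring
  -- the key inner product identity
  have hinner : (inner ℝ p u : ℝ) - inner ℝ q u
      = (1 - lam) * ((inner ℝ p q : ℝ) - inner ℝ q q) := by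
    simp only [PiLp.inner_apply, RCLike.inner_apply', conj_trivial]
    have expand : ∀ x : EuclideanSpace ℝ (Fin E),
        ∑ i, x i * u i
          = (1 - lam) * (∑ i, x i * q i) - ((1 - lam) / E - S / E) * ∑ i, x i := by
      intro x
      rw [Finset.mul_sum, Finset.mul_sum, ← Finset.sum_sub_distrib]
      refine Finset.sum_congr rfl fun j _ => ?_
      rw [hc j]; ring
    rw [expand p, expand q, hp.2, hsumq]
    ring
  -- key decomposition of the objective
  have key : sparsegenObj u lam p
      = sparsegenObj u lam q + (1 - lam) * ‖p - q‖ ^ 2 := by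
    have e1 : ‖p - u‖ ^ 2 = ‖p‖ ^ 2 - 2 * inner ℝ p u + ‖u‖ ^ 2 :=
      norm_sub_sq_real p u
    have e2 : ‖q - u‖ ^ 2 = ‖q‖ ^ 2 - 2 * inner ℝ q u + ‖u‖ ^ 2 :=
      norm_sub_sq_real q u
    have e3 : ‖p - q‖ ^ 2 = ‖p‖ ^ 2 - 2 * inner ℝ p q + ‖q‖ ^ 2 :=
      norm_sub_sq_real p q
    have e4 : (inner ℝ q q : ℝ) = ‖q‖ ^ 2 := real_inner_self_eq_norm_sq q
    simp only [sparsegenObj, e1, e2, e3]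
    rw [e4] at hinner
    linarith [hinner]
  have hle : sparsegenObj u lam p ≤ sparsegenObj u lam q := hmin hqs
  have h4 : ‖p - q‖ ^ 2 ≤ 0 := by
    by_contra h
    push_neg at h
    have := mul_pos hlam' h
    linarith
  have h5 : ‖p - q‖ ^ 2 = 0 := le_antisymm h4 (sq_nonneg _)
  have hnz : ‖p - q‖ = 0 := by
    exact pow_eq_zero_iff (by norm_num : (2:ℕ) ≠ 0) |>.mp h5
  have hpq : p = q := sub_eq_zero.mp (norm_eq_zero.mp hnz)
  intro i
  rw [hpq]
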